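/- Let k be a positive integer and β, γ > 0. Define, for θ ∈ ℝ^k, u(θ) = Σ_{m=1}^{k} e^{θ_m}, S_k(θ) = ln(u(θ)/k) − (γ/β)(1 − k/u(θ)), and the Hamiltonian H_k(y,θ) = β(Σ_{m=1}^{k} y_m)(1 − Σ_{m=1}^{k} y_m)(e^{θ₁} − 1) + kγ Σ_{m=1}^{k−1} y_m (e^{−θ_m + θ_{m+1}} − 1) + kγ y_k (e^{−θ_k} − 1). Then for every θ ∈ ℝ^k, H_k( ∇S_k(θ), θ ) = 0, where ∇S_k(θ) is the gradient of S_k at θ; moreover S_k(0) = 0. -/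

import Mathlib

open Real Finset

lemma sis_alg_aux (β γ x e : ℝ) (kk : ℕ) (hβ : β ≠ 0) (hx : x ≠ 0) :
    β * ((1 / x - γ / β * (kk / x ^ 2)) * x) * (1 - (1 / x - γ / β * (kk / x ^ 2)) * x) *
        (e - 1)
      + kk * γ * ((1 / x - γ / β * (kk / x ^ 2)) * (1 - e)) = 0 := by
  field_simp
  ring

/-- For the SIS model with `k` Erlang infectious stages, the function
`S_k(θ) = ln(u(θ)/k) - (γ/β)(1 - k/u(θ))`, where `u(θ) = Σ_m e^{θ_m}`, solves
the stationary Hamilton–Jacobi equation `H_k(∇S_k(θ), θ) = 0` for every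
`θ ∈ ℝ^k`, and satisfies `S_k(0) = 0`. Here
`H_k(y,θ) = β(Σ y_m)(1 - Σ y_m)(e^{θ₁} - 1)
  + kγ Σ_{m=1}^{k-1} y_m (e^{-θ_m + θ_{m+1}} - 1) + kγ y_k (e^{-θ_k} - 1)`. -/
theorem sis_erlang_hamilton_jacobi_solution
    (k : ℕ) (hk : 0 < k) (β γ : ℝ) (hβ : 0 < β) (hγ : 0 < γ) :
    let u : EuclideanSpace ℝ (Fin k) → ℝ := fun θ => ∑ m : Fin k, Real.exp (θ m)
    let S : EuclideanSpace ℝ (Fin k) → ℝ :=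
      fun θ => Real.log (u θ / k) - (γ / β) * (1 - k / u θ)
    (∀ θ : EuclideanSpace ℝ (Fin k),
      β * (∑ m : Fin k, gradient S θ m) * (1 - ∑ m : Fin k, gradient S θ m) *
          (Real.exp (θ ⟨0, hk⟩) - 1) +
        k * γ * ∑ m : Fin k, gradient S θ m *
          (Real.exp (-θ m + (if h : (m : ℕ) + 1 < k then θ ⟨(m : ℕ) + 1, h⟩ else 0)) - 1)
        = 0) ∧
    S 0 = 0 := by
  intro u S
  have hkR : (0:ℝ) < k := by exact_mod_cast hk
  constructor
  · intro θ
    set u0 : ℝ := ∑ m : Fin k, Real.exp (θ m) with hu0def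
    haveI : Nonempty (Fin k) := ⟨⟨0, hk⟩⟩
    have hu0 : 0 < u0 := Finset.sum_pos (fun m _ => Real.exp_pos _) Finset.univ_nonempty
    set c : ℝ := 1 / u0 - (γ / β) * (k / u0 ^ 2) with hcdef
    -- derivative of u
    have hu : HasFDerivAt u
        (∑ m : Fin k, Real.exp (θ m) • EuclideanSpace.proj (𝕜 := ℝ) m) θ := by
      have : HasFDerivAt (fun θ' : EuclideanSpace ℝ (Fin k) => ∑ m : Fin k, Real.exp (θ' m))
          (∑ m : Fin k, Real.exp (θ m) • EuclideanSpace.proj (𝕜 := ℝ) m) θ :=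
        HasFDerivAt.fun_sum fun m _ =>
          by have := (Real.hasDerivAt_exp (θ m)).comp_hasFDerivAt θ
                ((EuclideanSpace.proj (𝕜 := ℝ) m).hasFDerivAt); exact this
      exact this
    -- derivative of the outer function
    have hφ : HasDerivAt (fun x : ℝ => Real.log (x / k) - (γ / β) * (1 - k / x)) c u0 := by
      have h1 : HasDerivAt (fun x : ℝ => Real.log (x / k)) (1 / u0) u0 := by
        have := ((hasDerivAt_id u0).div_const (k:ℝ)).log
          (by positivity)
        convert this using 1
        show 1 / u0 = 1 / (k:ℝ) / (u0 / k)
        field_simp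
        rfl
      have h2 : HasDerivAt (fun x : ℝ => (γ / β) * (1 - (k:ℝ) / x))
          ((γ / β) * (k / u0 ^ 2)) u0 := by
        have hinv : HasDerivAt (fun x : ℝ => (k:ℝ) / x) (-(k / u0 ^ 2)) u0 := by
          have := (hasDerivAt_inv hu0.ne').const_mul (k:ℝ)
          simpa [div_eq_mul_inv, mul_comm, mul_left_comm, neg_mul, mul_neg] using this
        have := ((hasDerivAt_const u0 (1:ℝ)).sub hinv).const_mul (γ / β)
        simpa using this
      simpa [hcdef] using h1.fun_sub h2
    have hS : HasFDerivAt S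
        (c • ∑ m : Fin k, Real.exp (θ m) • EuclideanSpace.proj (𝕜 := ℝ) m) θ :=
      by have := hφ.comp_hasFDerivAt θ hu; exact this
    -- gradient
    have hg : HasGradientAt S
        (WithLp.toLp 2 (fun m => c * Real.exp (θ m)) : EuclideanSpace ℝ (Fin k)) θ := by
      rw [hasGradientAt_iff_hasFDerivAt]
      refine hS.congr_fderiv ?_
      apply ContinuousLinearMap.ext
      intro v
      have hproj : ∀ x : Fin k, (EuclideanSpace.proj (𝕜 := ℝ) x) v = v x := fun x => rfl
      simp only [InnerProductSpace.toDual_apply_apply, PiLp.inner_apply, RCLike.inner_apply,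
        ContinuousLinearMap.smul_apply, ContinuousLinearMap.sum_apply, conj_trivial,
        hproj, smul_eq_mul, Finset.mul_sum]
      exact Finset.sum_congr rfl fun x _ => by ring
    have hgrad : gradient S θ = (WithLp.toLp 2 (fun m => c * Real.exp (θ m)) : EuclideanSpace ℝ (Fin k)) :=
      hg.gradient
    have hgm : ∀ m : Fin k, gradient S θ m = c * Real.exp (θ m) := by
      intro m; rw [hgrad]
    -- sum of gradient components
    have hsum : (∑ m : Fin k, gradient S θ m) = c * u0 := by
      simp only [hgm]; rw [← Finset.mul_sum]
    -- telescoping sum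
    set f : ℕ → ℝ := fun n => if h : n < k then Real.exp (θ ⟨n, h⟩) else 1 with hfdef
    have hf0 : f 0 = Real.exp (θ ⟨0, hk⟩) := by simp [hfdef, hk]
    have hfk : f k = 1 := by simp [hfdef]
    have hfu : ∑ i ∈ Finset.range k, f i = u0 := by
      rw [hu0def, ← Fin.sum_univ_eq_sum_range f]
      exact Finset.sum_congr rfl fun m _ => by simp [hfdef, m.isLt]
    have htel : ∑ m : Fin k,
        Real.exp ((if h : (m : ℕ) + 1 < k then θ ⟨(m : ℕ) + 1, h⟩ else 0))
        = 1 + u0 - Real.exp (θ ⟨0, hk⟩) := by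
      have h1 : ∀ m : Fin k,
          Real.exp ((if h : (m : ℕ) + 1 < k then θ ⟨(m : ℕ) + 1, h⟩ else 0))
          = f ((m : ℕ) + 1) := by
        intro m
        by_cases h : (m : ℕ) + 1 < k <;> simp [hfdef, h]
      rw [Finset.sum_congr rfl (fun m _ => h1 m),
        Fin.sum_univ_eq_sum_range (fun n => f (n + 1))]
      have h2 : ∑ i ∈ Finset.range (k + 1), f i
          = ∑ i ∈ Finset.range k, f (i + 1) + f 0 := Finset.sum_range_succ' f k
      have h3 : ∑ i ∈ Finset.range (k + 1), f i
          = ∑ i ∈ Finset.range k, f i + f k := Finset.sum_range_succ f k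
      have := h2.symm.trans h3
      rw [hfu, hfk, hf0] at this
      linarith
    have hsum2 : (∑ m : Fin k, gradient S θ m *
        (Real.exp (-θ m + (if h : (m : ℕ) + 1 < k then θ ⟨(m : ℕ) + 1, h⟩ else 0)) - 1))
        = c * (1 - Real.exp (θ ⟨0, hk⟩)) := by
      have h1 : ∀ m : Fin k, gradient S θ m *
          (Real.exp (-θ m + (if h : (m : ℕ) + 1 < k then θ ⟨(m : ℕ) + 1, h⟩ else 0)) - 1)
          = c * (Real.exp ((if h : (m : ℕ) + 1 < k then θ ⟨(m : ℕ) + 1, h⟩ else 0))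
              - Real.exp (θ m)) := by
        intro m
        rw [hgm m]
        generalize (if h : (m : ℕ) + 1 < k then θ ⟨(m : ℕ) + 1, h⟩ else 0) = t
        have hexp : Real.exp (θ m) * Real.exp (-θ m + t) = Real.exp t := by
          rw [← Real.exp_add]; congr 1; ring
        calc c * Real.exp (θ m) * (Real.exp (-θ m + t) - 1)
            = c * (Real.exp (θ m) * Real.exp (-θ m + t) - Real.exp (θ m)) := by ring
          _ = c * (Real.exp t - Real.exp (θ m)) := by rw [hexp]
      rw [Finset.sum_congr rfl (fun m _ => h1 m), ← Finset.mul_sum,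
        Finset.sum_sub_distrib, htel, ← hu0def]
      ring
    rw [hsum, hsum2]
    exact sis_alg_aux β γ u0 (Real.exp (θ ⟨0, hk⟩)) k hβ.ne' hu0.ne'
  · have hu0 : u 0 = k := by
      show (∑ m : Fin k, Real.exp ((0 : EuclideanSpace ℝ (Fin k)) m)) = k
      simp
    show Real.log (u 0 / k) - (γ / β) * (1 - k / u 0) = 0
    rw [hu0, div_self hkR.ne', Real.log_one]
    ring
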